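/- For every positive integer m, the number of partitions p(m) satisfies p(m) ≤ e^{π·√(2m/3)}. -/

import Mathlib

open Finset Real


lemma multiset_sum_eq_sum_count (s : Multiset ℕ) :
    s.sum = ∑ a ∈ s.toFinset, s.count a * a := by
  conv_lhs => rw [← Multiset.toFinset_sum_count_nsmul_eq s]
  rw [Multiset.sum_sum]
  simp [Multiset.sum_nsmul]

lemma partition_mul_pow_le (m : ℕ) (x : ℝ) (hx0 : 0 ≤ x) :
    (Nat.card (Nat.Partition m) : ℝ) * x ^ m
      ≤ ∏ n ∈ Finset.Icc 1 m, ∑ j ∈ Finset.range (m + 1), x ^ (n * j) := by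
  classical
  rw [Finset.prod_sum]
  -- the injection from partitions into `pi`
  set G : Nat.Partition m → (∀ a ∈ Finset.Icc 1 m, ℕ) :=
    fun p a _ => p.parts.count a with hG
  have hmem : ∀ p : Nat.Partition m, ∀ a ∈ p.parts, a ∈ Finset.Icc 1 m := by
    intro p a ha
    simp only [Finset.mem_Icc]
    exact ⟨p.parts_pos ha, p.parts_sum ▸ Multiset.le_sum_of_mem ha⟩
  have hGmem : ∀ p : Nat.Partition m,
      G p ∈ (Finset.Icc 1 m).pi (fun _ => Finset.range (m + 1)) := by
    intro p
    rw [Finset.mem_pi]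
    intro a ha
    rw [Finset.mem_range, Nat.lt_succ_iff]
    by_cases h : a ∈ p.parts.toFinset
    · have h1 : 1 ≤ a := (Finset.mem_Icc.mp ha).1
      calc p.parts.count a ≤ p.parts.count a * a := Nat.le_mul_of_pos_right _ h1
        _ ≤ ∑ b ∈ p.parts.toFinset, p.parts.count b * b :=
            Finset.single_le_sum (f := fun b => p.parts.count b * b)
              (fun _ _ => Nat.zero_le _) h
        _ = m := by rw [← multiset_sum_eq_sum_count, p.parts_sum]
    · show p.parts.count a ≤ m
      rw [Multiset.count_eq_zero_of_notMem (fun hc => h (Multiset.mem_toFinset.mpr hc))]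
      exact Nat.zero_le _
  have hGinj : Function.Injective G := by
    intro p q hpq
    ext n
    by_cases h : n ∈ Finset.Icc 1 m
    · have := congrFun (congrFun hpq n) h
      simpa [hG] using this
    · rw [Multiset.count_eq_zero_of_notMem (fun hc => h (hmem p n hc)),
        Multiset.count_eq_zero_of_notMem (fun hc => h (hmem q n hc))]
  have hterm : ∀ p : Nat.Partition m,
      ∏ a ∈ (Finset.Icc 1 m).attach, x ^ (a.1 * G p a.1 a.2) = x ^ m := by
    intro p
    rw [Finset.prod_pow_eq_pow_sum]
    congr 1
    have hsub : p.parts.toFinset ⊆ Finset.Icc 1 m := fun a ha =>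
      hmem p a (Multiset.mem_toFinset.mp ha)
    have : ∑ a ∈ (Finset.Icc 1 m).attach, a.1 * G p a.1 a.2
        = ∑ a ∈ Finset.Icc 1 m, a * p.parts.count a := by
      rw [← Finset.sum_attach (Finset.Icc 1 m) (fun a => a * p.parts.count a)]
    have h2 : ∑ a ∈ Finset.Icc 1 m, a * p.parts.count a = p.parts.sum := by
      rw [multiset_sum_eq_sum_count,
        Finset.sum_subset hsub (fun a _ ha => by
          rw [Multiset.count_eq_zero_of_notMem
            (fun hc => ha (Multiset.mem_toFinset.mpr hc)), Nat.zero_mul])]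
      exact Finset.sum_congr rfl fun a _ => Nat.mul_comm _ _
    rw [this, h2, p.parts_sum]
  calc (Nat.card (Nat.Partition m) : ℝ) * x ^ m
      = ∑ p ∈ Finset.univ.image G, x ^ m := by
        rw [Finset.sum_const, Finset.card_image_of_injective _ hGinj,
          Nat.card_eq_fintype_card, ← Finset.card_univ, nsmul_eq_mul]
    _ = ∑ f ∈ Finset.univ.image G, ∏ a ∈ (Finset.Icc 1 m).attach,
          x ^ (a.1 * f a.1 a.2) := by
        refine Finset.sum_congr rfl fun f hf => ?_
        obtain ⟨p, _, rfl⟩ := Finset.mem_image.mp hf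
        exact (hterm p).symm
    _ ≤ ∑ f ∈ (Finset.Icc 1 m).pi (fun _ => Finset.range (m + 1)),
          ∏ a ∈ (Finset.Icc 1 m).attach, x ^ (a.1 * f a.1 a.2) := by
        refine Finset.sum_le_sum_of_subset_of_nonneg ?_ fun f _ _ =>
          Finset.prod_nonneg fun a _ => pow_nonneg hx0 _
        intro f hf
        obtain ⟨p, _, rfl⟩ := Finset.mem_image.mp hf
        exact hGmem p


lemma geom_tail_le (m : ℕ) (y : ℝ) (h0 : 0 ≤ y) (h1 : y < 1) :
    ∑ n ∈ Finset.Icc 1 m, y ^ n ≤ y / (1 - y) := by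
  have hs : Summable (fun j : ℕ => y ^ (j + 1)) := by
    have h := (summable_geometric_of_lt_one h0 h1).mul_left y
    refine h.congr fun j => ?_
    rw [← pow_succ']
  calc ∑ n ∈ Finset.Icc 1 m, y ^ n = ∑ j ∈ Finset.range m, y ^ (1 + j) := by
        rw [← Finset.Ico_add_one_right_eq_Icc, Finset.sum_Ico_eq_sum_range]
        simp
    _ = ∑ j ∈ Finset.range m, y ^ (j + 1) :=
        Finset.sum_congr rfl fun j _ => by rw [add_comm]
    _ ≤ ∑' j : ℕ, y ^ (j + 1) := Summable.sum_le_tsum _ (fun _ _ => pow_nonneg h0 _) hs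
    _ = y * ∑' j : ℕ, y ^ j := by
        rw [← tsum_mul_left]
        exact tsum_congr fun j => by rw [← pow_succ']
    _ = y * (1 - y)⁻¹ := by rw [tsum_geometric_of_lt_one h0 h1]
    _ = y / (1 - y) := (div_eq_mul_inv y _).symm

lemma one_sub_pow_ge (k : ℕ) (x : ℝ) (hx0 : 0 ≤ x) (hx1 : x ≤ 1) :
    (k + 1 : ℝ) * x ^ k * (1 - x) ≤ 1 - x ^ (k + 1) := by
  have hgs := geom_sum_mul x (k + 1)
  have hsum : (k + 1 : ℝ) * x ^ k ≤ ∑ i ∈ Finset.range (k + 1), x ^ i := by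
    calc (k + 1 : ℝ) * x ^ k = ∑ _i ∈ Finset.range (k + 1), x ^ k := by
          rw [Finset.sum_const, Finset.card_range, nsmul_eq_mul]; push_cast; ring
      _ ≤ ∑ i ∈ Finset.range (k + 1), x ^ i :=
          Finset.sum_le_sum fun i hi =>
            pow_le_pow_of_le_one hx0 hx1 (Nat.lt_succ_iff.mp (Finset.mem_range.mp hi))
  nlinarith [hsum, sub_nonneg.mpr hx1, pow_nonneg hx0 k]

lemma aux_zeta_shift : ∑' k : ℕ, 1 / ((k : ℝ) + 1) ^ 2 = Real.pi ^ 2 / 6 := by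
  have h := hasSum_zeta_two
  have hz := h.tsum_eq
  rw [Summable.tsum_eq_zero_add h.summable] at hz
  simp only [Nat.cast_zero, Nat.cast_add, Nat.cast_one] at hz
  rw [← hz]
  norm_num

lemma sum_neg_log_le (m : ℕ) (x : ℝ) (hx0 : 0 < x) (hx1 : x < 1) :
    ∑ n ∈ Finset.Icc 1 m, -Real.log (1 - x ^ n)
      ≤ Real.pi ^ 2 / 6 * (x / (1 - x)) := by
  have h1x : (0 : ℝ) < 1 - x := by linarith
  have hhs : ∀ n ∈ Finset.Icc 1 m,
      HasSum (fun k : ℕ => (x ^ n) ^ (k + 1) / (k + 1)) (-Real.log (1 - x ^ n)) := by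
    intro n hn
    have hn1 : 1 ≤ n := (Finset.mem_Icc.mp hn).1
    exact hasSum_pow_div_log_of_abs_lt_one
      (by rw [abs_of_pos (pow_pos hx0 n)]; exact pow_lt_one₀ hx0.le hx1 (by omega))
  have hswap : ∑ n ∈ Finset.Icc 1 m, -Real.log (1 - x ^ n)
      = ∑' k : ℕ, ∑ n ∈ Finset.Icc 1 m, (x ^ n) ^ (k + 1) / (k + 1) := by
    rw [Summable.tsum_finsetSum (fun n hn => (hhs n hn).summable)]
    exact Finset.sum_congr rfl fun n hn => ((hhs n hn).tsum_eq).symm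
  rw [hswap]
  have hB : Summable (fun k : ℕ => 1 / ((k : ℝ) + 1) ^ 2) := by
    have h0 : Summable (fun n : ℕ => 1 / (n : ℝ) ^ 2) :=
      summable_one_div_nat_pow.mpr one_lt_two
    have := (summable_nat_add_iff 1).mpr h0
    exact this.congr fun k => by push_cast; ring
  have hpt : ∀ k : ℕ, ∑ n ∈ Finset.Icc 1 m, (x ^ n) ^ (k + 1) / (k + 1)
      ≤ x / (1 - x) * (1 / ((k : ℝ) + 1) ^ 2) := by
    intro k
    set y := x ^ (k + 1) with hy
    have hy0 : 0 < y := pow_pos hx0 _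
    have hy1 : y < 1 := pow_lt_one₀ hx0.le hx1 (Nat.succ_ne_zero k)
    have hk1 : (0 : ℝ) < (k : ℝ) + 1 := by positivity
    have h1y : (0 : ℝ) < 1 - y := by linarith
    have hmid : y / (1 - y) ≤ x / (((k : ℝ) + 1) * (1 - x)) := by
      rw [div_le_div_iff₀ h1y (by positivity)]
      have hb := one_sub_pow_ge k x hx0.le hx1.le
      have hxy : y = x ^ k * x := pow_succ x k
      calc y * (((k : ℝ) + 1) * (1 - x))
          = x * (((k : ℝ) + 1) * x ^ k * (1 - x)) := by rw [hxy]; ring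
        _ ≤ x * (1 - x ^ (k + 1)) := mul_le_mul_of_nonneg_left hb hx0.le
        _ = x * (1 - y) := by rw [← hy]
    calc ∑ n ∈ Finset.Icc 1 m, (x ^ n) ^ (k + 1) / (k + 1)
        = (∑ n ∈ Finset.Icc 1 m, y ^ n) / ((k : ℝ) + 1) := by
          rw [← Finset.sum_div]
          refine congrArg (· / ((k : ℝ) + 1)) ?_
          refine Finset.sum_congr rfl fun n _ => ?_
          rw [hy, ← pow_mul, ← pow_mul, Nat.mul_comm]
      _ ≤ (y / (1 - y)) / ((k : ℝ) + 1) :=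
          (div_le_div_iff_of_pos_right hk1).mpr (geom_tail_le m y hy0.le hy1)
      _ ≤ (x / (((k : ℝ) + 1) * (1 - x))) / ((k : ℝ) + 1) :=
          (div_le_div_iff_of_pos_right hk1).mpr hmid
      _ = x / (1 - x) * (1 / ((k : ℝ) + 1) ^ 2) := by
          rw [div_div, mul_one_div, div_div]
          congr 1
          ring
  have hS : Summable (fun k : ℕ => ∑ n ∈ Finset.Icc 1 m, (x ^ n) ^ (k + 1) / (k + 1)) :=
    (hasSum_sum hhs).summable
  calc ∑' k : ℕ, ∑ n ∈ Finset.Icc 1 m, (x ^ n) ^ (k + 1) / (k + 1)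
      ≤ ∑' k : ℕ, x / (1 - x) * (1 / ((k : ℝ) + 1) ^ 2) :=
        Summable.tsum_le_tsum hpt hS (hB.mul_left _)
    _ = x / (1 - x) * ∑' k : ℕ, 1 / ((k : ℝ) + 1) ^ 2 := tsum_mul_left
    _ = x / (1 - x) * (Real.pi ^ 2 / 6) := by rw [aux_zeta_shift]
    _ = Real.pi ^ 2 / 6 * (x / (1 - x)) := mul_comm _ _

/-- The partition function satisfies `p(m) ≤ exp (π·√(2m/3))` for every `m ≥ 1`. -/
theorem partition_upper_bound (m : ℕ) (hm : 1 ≤ m) :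
    (Nat.card (Nat.Partition m) : ℝ)
      ≤ Real.exp (Real.pi * Real.sqrt (2 * m / 3)) := by
  have hm0 : (0 : ℝ) < m := by exact_mod_cast hm
  set u := Real.sqrt (2 * m / 3) with hu
  have hu0 : 0 < u := Real.sqrt_pos.mpr (by positivity)
  have hu2 : u ^ 2 = 2 * m / 3 := Real.sq_sqrt (by positivity)
  have hpi := Real.pi_pos
  set t := 3 * u / Real.pi with ht
  have ht0 : 0 < t := by positivity
  set x := t / (t + 1) with hx
  have hx0 : 0 < x := by positivity
  have hx1 : x < 1 := by
    rw [hx, div_lt_one (by linarith)]; linarith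
  have h1x : (0 : ℝ) < 1 - x := by linarith
  have hxfrac : x / (1 - x) = t := by
    rw [hx]
    have h : t + 1 ≠ 0 := by linarith
    field_simp
    ring
  -- each geometric factor is at most exp(-log(1 - x^n))
  have hfac : ∀ n ∈ Finset.Icc 1 m,
      ∑ j ∈ Finset.range (m + 1), x ^ (n * j) ≤ Real.exp (-Real.log (1 - x ^ n)) := by
    intro n hn
    have hxn0 : 0 < x ^ n := pow_pos hx0 n
    have hxn1 : x ^ n < 1 :=
      pow_lt_one₀ hx0.le hx1 (by have := (Finset.mem_Icc.mp hn).1; omega)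
    have h1xn : (0 : ℝ) < 1 - x ^ n := by linarith
    have hgeo : Summable (fun j : ℕ => (x ^ n) ^ j) :=
      summable_geometric_of_lt_one hxn0.le hxn1
    calc ∑ j ∈ Finset.range (m + 1), x ^ (n * j)
        = ∑ j ∈ Finset.range (m + 1), (x ^ n) ^ j :=
          Finset.sum_congr rfl fun j _ => by rw [pow_mul]
      _ ≤ ∑' j : ℕ, (x ^ n) ^ j :=
          Summable.sum_le_tsum _ (fun _ _ => pow_nonneg hxn0.le _) hgeo
      _ = (1 - x ^ n)⁻¹ := tsum_geometric_of_lt_one hxn0.le hxn1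
      _ = Real.exp (-Real.log (1 - x ^ n)) := by
          rw [Real.exp_neg, Real.exp_log h1xn]
  have hprod : (Nat.card (Nat.Partition m) : ℝ) * x ^ m
      ≤ Real.exp (Real.pi ^ 2 / 6 * t) := by
    calc (Nat.card (Nat.Partition m) : ℝ) * x ^ m
        ≤ ∏ n ∈ Finset.Icc 1 m, ∑ j ∈ Finset.range (m + 1), x ^ (n * j) :=
          partition_mul_pow_le m x hx0.le
      _ ≤ ∏ n ∈ Finset.Icc 1 m, Real.exp (-Real.log (1 - x ^ n)) :=
          Finset.prod_le_prod (fun n _ => Finset.sum_nonneg fun j _ => pow_nonneg hx0.le _)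
            hfac
      _ = Real.exp (∑ n ∈ Finset.Icc 1 m, -Real.log (1 - x ^ n)) :=
          (Real.exp_sum _ _).symm
      _ ≤ Real.exp (Real.pi ^ 2 / 6 * t) := by
          rw [Real.exp_le_exp]
          have := sum_neg_log_le m x hx0 hx1
          rwa [hxfrac] at this
  -- divide by x ^ m
  have hxm : (0 : ℝ) < x ^ m := pow_pos hx0 m
  have h2 : (Nat.card (Nat.Partition m) : ℝ)
      ≤ Real.exp (Real.pi ^ 2 / 6 * t) * (x⁻¹) ^ m := by
    rw [inv_pow, ← div_eq_mul_inv, le_div_iff₀ hxm]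
    exact hprod
  have hxinv : x⁻¹ ≤ Real.exp (1 / t) := by
    have : x⁻¹ = 1 / t + 1 := by
      rw [hx, inv_div]
      field_simp
      ring
    rw [this]
    exact Real.add_one_le_exp (1 / t)
  have h3 : (x⁻¹) ^ m ≤ Real.exp ((m : ℝ) / t) := by
    calc (x⁻¹) ^ m ≤ Real.exp (1 / t) ^ m :=
          pow_le_pow_left₀ (by positivity) hxinv m
      _ = Real.exp ((m : ℝ) * (1 / t)) := by rw [← Real.exp_nat_mul]
      _ = Real.exp ((m : ℝ) / t) := by rw [mul_one_div]
  have hexp : Real.pi ^ 2 / 6 * t + (m : ℝ) / t = Real.pi * u := by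
    rw [ht]
    have hπ : Real.pi ≠ 0 := ne_of_gt hpi
    have hu' : u ≠ 0 := ne_of_gt hu0
    field_simp
    nlinarith [hu2, sq_nonneg u, hpi, hu0]
  calc (Nat.card (Nat.Partition m) : ℝ)
      ≤ Real.exp (Real.pi ^ 2 / 6 * t) * (x⁻¹) ^ m := h2
    _ ≤ Real.exp (Real.pi ^ 2 / 6 * t) * Real.exp ((m : ℝ) / t) :=
        mul_le_mul_of_nonneg_left h3 (Real.exp_nonneg _)
    _ = Real.exp (Real.pi ^ 2 / 6 * t + (m : ℝ) / t) := (Real.exp_add _ _).symm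
    _ = Real.exp (Real.pi * u) := by rw [hexp]
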